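/- Let x_1, …, x_K be vectors in ℝ^d with ‖x_k‖₂ ≤ 1 for all k and with the linear span of {x_1, …, x_K} of dimension at most r, and let λ > 0. Then log det(I_d + (1/λ)·∑_{k=1}^{K} x_k x_kᵀ) ≤ r·log(1 + K/λ). -/

import Mathlib

open Matrix

/-- for unit-bounded vectors `x_1, …, x_K` of span dimension at most `r`,
`log det(I + (1/λ) ∑_k x_k x_kᵀ) ≤ r log(1 + K/λ)`. -/
theorem log_det_le_rank_log
    {d r K : ℕ} (lam : ℝ) (hlam : 0 < lam)
    (x : Fin K → (Fin d → ℝ))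
    (hnorm : ∀ k, Real.sqrt (∑ c, (x k c) ^ 2) ≤ 1)
    (hx : Module.finrank ℝ (Submodule.span ℝ (Set.range x)) ≤ r) :
    Real.log ((1 + (1 / lam) • ∑ k, vecMulVec (x k) (x k) :
        Matrix (Fin d) (Fin d) ℝ).det)
      ≤ r * Real.log (1 + K / lam) := by
  classical
  set X : Matrix (Fin d) (Fin K) ℝ := Matrix.of (fun i k => x k i) with hXdef
  have hXt : Xᵀ = Matrix.of x := by
    ext k i; rfl
  have hsum : (∑ k, vecMulVec (x k) (x k)) = X * Xᵀ := by
    ext i j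
    simp [Matrix.sum_apply, mul_apply, vecMulVec_apply, X]
  -- reduce to Gram matrix
  have hdetcomm :
      ((1 + (1 / lam) • ∑ k, vecMulVec (x k) (x k) : Matrix (Fin d) (Fin d) ℝ)).det
        = (1 + (1 / lam) • (Xᵀ * X)).det := by
    rw [hsum, ← Matrix.mul_smul, Matrix.det_one_add_mul_comm, Matrix.smul_mul]
  have hherm : (Xᵀ * X).IsHermitian := by
    have := isHermitian_conjTranspose_mul_self X
    rwa [conjTranspose_eq_transpose_of_trivial] at this
  have hpsd : (Xᵀ * X).PosSemidef := by
    have := posSemidef_conjTranspose_mul_self X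
    rwa [conjTranspose_eq_transpose_of_trivial] at this
  set μ : Fin K → ℝ := hherm.eigenvalues with hμdef
  have hμ0 : ∀ i, 0 ≤ μ i := fun i => hpsd.eigenvalues_nonneg i
  -- trace bound
  have htr : (Xᵀ * X).trace ≤ (K : ℝ) := by
    have hone : ∀ k : Fin K, ∑ i, (x k i) ^ 2 ≤ 1 := by
      intro k
      have h1 := hnorm k
      have h2 : (0:ℝ) ≤ ∑ c, (x k c) ^ 2 :=
        Finset.sum_nonneg fun c _ => sq_nonneg _
      nlinarith [Real.sq_sqrt h2, Real.sqrt_nonneg (∑ c, (x k c) ^ 2)]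
    calc (Xᵀ * X).trace = ∑ k, ∑ i, (x k i) ^ 2 := by
          simp [Matrix.trace, Matrix.diag, mul_apply, X, sq]
      _ ≤ ∑ _k : Fin K, (1:ℝ) := Finset.sum_le_sum fun k _ => hone k
      _ = (K : ℝ) := by simp
  -- sum of eigenvalues = trace
  have hsumeig : ∑ i, μ i = (Xᵀ * X).trace := by
    set U : Matrix (Fin K) (Fin K) ℝ :=
      (hherm.eigenvectorUnitary : Matrix (Fin K) (Fin K) ℝ) with hUdef
    have hsU : star U * U = 1 :=
      (Matrix.mem_unitaryGroup_iff').mp (hherm.eigenvectorUnitary).2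
    have hspec : Xᵀ * X = U * diagonal ((RCLike.ofReal : ℝ → ℝ) ∘ μ) * star U :=
      hherm.spectral_theorem
    rw [hspec, Matrix.trace_mul_cycle, hsU, Matrix.one_mul]
    simp [RCLike.ofReal_real_eq_id, Matrix.trace_diagonal]
  have hμK : ∀ i, μ i ≤ (K : ℝ) := by
    intro i
    have : μ i ≤ ∑ j, μ j :=
      Finset.single_le_sum (fun j _ => hμ0 j) (Finset.mem_univ i)
    linarith [hsumeig ▸ this, htr]
  -- determinant as product of shifted eigenvalues
  have hdet : (1 + (1 / lam) • (Xᵀ * X)).det = ∏ i, (1 + μ i / lam) := by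
    set U : Matrix (Fin K) (Fin K) ℝ :=
      (hherm.eigenvectorUnitary : Matrix (Fin K) (Fin K) ℝ) with hUdef
    have hspec : Xᵀ * X = U * diagonal ((RCLike.ofReal : ℝ → ℝ) ∘ μ) * star U :=
      hherm.spectral_theorem
    have hUU : U * star U = 1 := (Matrix.mem_unitaryGroup_iff).mp (hherm.eigenvectorUnitary).2
    have hkey : (1 : Matrix (Fin K) (Fin K) ℝ) + (1 / lam) • (Xᵀ * X)
        = U * diagonal (fun i => 1 + μ i / lam) * star U := by
      have hdiag : diagonal (fun i => 1 + μ i / lam)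
          = 1 + (1 / lam) • diagonal ((RCLike.ofReal : ℝ → ℝ) ∘ μ) := by
        rw [RCLike.ofReal_real_eq_id]
        ext i j
        by_cases h : i = j <;>
          simp [Matrix.diagonal, Matrix.one_apply, h, div_eq_inv_mul, mul_comm]
      rw [hdiag, Matrix.mul_add, Matrix.add_mul, Matrix.mul_one, hUU,
        Matrix.mul_smul, Matrix.smul_mul, ← hspec]
    rw [hkey, Matrix.det_mul_right_comm, hUU, Matrix.one_mul, Matrix.det_diagonal]
  rw [hdetcomm, hdet]
  -- bound the product
  set s : Finset (Fin K) := Finset.univ.filter (fun i => μ i ≠ 0) with hsdef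
  have hprod1 : ∏ i, (1 + μ i / lam) = ∏ i ∈ s, (1 + μ i / lam) := by
    refine (Finset.prod_subset (Finset.subset_univ s) ?_).symm
    intro i _ hi
    have : μ i = 0 := by
      by_contra h
      exact hi (Finset.mem_filter.mpr ⟨Finset.mem_univ i, h⟩)
    simp [this]
  have hcard : s.card ≤ r := by
    have h1 : (Xᵀ * X).rank = Fintype.card {i // μ i ≠ 0} :=
      hherm.rank_eq_card_non_zero_eigs
    have h2 : (Xᵀ * X).rank = X.rank := Matrix.rank_transpose_mul_self X
    have h3 : X.rank ≤ r := by
      rw [Matrix.rank_eq_finrank_span_cols, show X.col = Xᵀ from rfl, hXt]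
      have : Set.range (Matrix.of x) = Set.range x := rfl
      rw [this]
      exact hx
    have h4 : s.card = Fintype.card {i // μ i ≠ 0} := by
      rw [Fintype.card_subtype]
    omega
  have hbase1 : (1:ℝ) ≤ 1 + (K:ℝ) / lam := by
    have : (0:ℝ) ≤ (K:ℝ) / lam := div_nonneg (Nat.cast_nonneg K) hlam.le
    linarith
  have hprodle : ∏ i ∈ s, (1 + μ i / lam) ≤ (1 + (K:ℝ) / lam) ^ r := by
    calc ∏ i ∈ s, (1 + μ i / lam) ≤ ∏ _i ∈ s, (1 + (K:ℝ) / lam) := by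
          refine Finset.prod_le_prod (fun i _ => ?_) (fun i _ => ?_)
          · have : (0:ℝ) ≤ μ i / lam := div_nonneg (hμ0 i) hlam.le
            linarith
          · have hmono : μ i / lam ≤ (K:ℝ) / lam := by
              gcongr
              exact hμK i
            linarith
      _ = (1 + (K:ℝ) / lam) ^ s.card := by rw [Finset.prod_const]
      _ ≤ (1 + (K:ℝ) / lam) ^ r := pow_le_pow_right₀ hbase1 hcard
  have hdetpos : (0:ℝ) < ∏ i, (1 + μ i / lam) := by
    refine Finset.prod_pos fun i _ => ?_
    have : (0:ℝ) ≤ μ i / lam := div_nonneg (hμ0 i) hlam.le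
    linarith
  calc Real.log (∏ i, (1 + μ i / lam))
      ≤ Real.log ((1 + (K:ℝ) / lam) ^ r) := by
        apply Real.log_le_log hdetpos
        rw [hprod1]; exact hprodle
    _ = r * Real.log (1 + (K:ℝ) / lam) := by rw [Real.log_pow]
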